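/- Let Q* minimize I(Q) + D(Q) over joint distributions Q with X-marginal P and Y-marginal Q_Y, and write R₁(Q_Y) = I(Q*), D₁(Q_Y) = D(Q*). Then for R ≥ R₁(Q_Y), μ(Q_Y, R) = R₁(Q_Y) + D₁(Q_Y), while for R < R₁(Q_Y), μ(Q_Y, R) = R + D̄(R; Q_Y), where μ(Q_Y,R) = min{I(Q)+D(Q) : I(Q) ≤ R} and D̄(R;Q_Y) = min{D(Q) : I(Q) ≤ R} (all minima over Q with the given marginals). -/
import Mathlib

open scoped BigOperators

variable {X Y : Type*} [Fintype X] [Fintype Y]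

/-- X-marginal of a joint distribution on `X × Y`. -/
noncomputable def margX (Q : X × Y → ℝ) (x : X) : ℝ := ∑ y, Q (x, y)

/-- Y-marginal of a joint distribution on `X × Y`. -/
noncomputable def margY (Q : X × Y → ℝ) (y : Y) : ℝ := ∑ x, Q (x, y)

/-- Mutual information `I(Q)` of a joint distribution `Q` on `X × Y`. -/
noncomputable def mutInfo (Q : X × Y → ℝ) : ℝ :=
  ∑ x, ∑ y, Q (x, y) * Real.log (Q (x, y) / (margX Q x * margY Q y))

/-- Expected "distortion" `D(Q) = E_Q[d(X,Y)]`. -/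
noncomputable def Dav (d : X → Y → ℝ) (Q : X × Y → ℝ) : ℝ :=
  ∑ x, ∑ y, Q (x, y) * d x y

/-- `Q` is a joint distribution with X-marginal `P` and Y-marginal `QY`. -/
def IsJoint (P : X → ℝ) (QY : Y → ℝ) (Q : X × Y → ℝ) : Prop :=
  (∀ p, 0 ≤ Q p) ∧ (∀ x, margX Q x = P x) ∧ (∀ y, margY Q y = QY y)

lemma mutInfo_eq_aux (P : X → ℝ) (QY : Y → ℝ) (Q : X × Y → ℝ) (h : IsJoint P QY Q) :
    mutInfo Q = ∑ x, ∑ y, Q (x, y) * Real.log (Q (x, y) / (P x * QY y)) := by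
  unfold mutInfo
  refine Finset.sum_congr rfl fun x _ => Finset.sum_congr rfl fun y _ => ?_
  rw [h.2.1 x, h.2.2 y]

lemma joint_zero_aux (P : X → ℝ) (QY : Y → ℝ) (Q : X × Y → ℝ) (h : IsJoint P QY Q)
    (x : X) (y : Y) (hc : P x * QY y = 0) : Q (x, y) = 0 := by
  have h1 : Q (x, y) ≤ P x := by
    rw [← h.2.1 x]
    exact Finset.single_le_sum (fun y' _ => h.1 (x, y')) (Finset.mem_univ y)
  have h2 : Q (x, y) ≤ QY y := by
    rw [← h.2.2 y]
    exact Finset.single_le_sum (fun x' _ => h.1 (x', y)) (Finset.mem_univ x)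
  rcases mul_eq_zero.1 hc with h0 | h0
  · exact le_antisymm (h0 ▸ h1) (h.1 (x, y))
  · exact le_antisymm (h0 ▸ h2) (h.1 (x, y))

lemma phi_eq_aux (c : ℝ) (hc : c ≠ 0) (u : ℝ) :
    u * Real.log (u / c) = u * Real.log u - Real.log c * u := by
  rcases eq_or_ne u 0 with rfl | hu
  · simp
  · rw [Real.log_div hu hc]; ring

lemma cont_phi_aux (c : ℝ) : Continuous fun u : ℝ => u * Real.log (u / c) := by
  rcases eq_or_ne c 0 with rfl | hc
  · have : (fun u : ℝ => u * Real.log (u / 0)) = fun _ => (0 : ℝ) := by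
      funext u; simp
    rw [this]; exact continuous_const
  · have : (fun u : ℝ => u * Real.log (u / c))
        = fun u => u * Real.log u - Real.log c * u := funext (phi_eq_aux c hc)
    rw [this]
    exact Real.continuous_mul_log.sub (continuous_const.mul continuous_id)

lemma phi_convex_aux (c a b t : ℝ) (ha : 0 ≤ a) (hb : 0 ≤ b) (ht0 : 0 ≤ t) (ht1 : t ≤ 1)
    (hc : c = 0 → a = 0 ∧ b = 0) :
    ((1 - t) * a + t * b) * Real.log (((1 - t) * a + t * b) / c)
      ≤ (1 - t) * (a * Real.log (a / c)) + t * (b * Real.log (b / c)) := by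
  rcases eq_or_ne c 0 with hc0 | hc0
  · obtain ⟨rfl, rfl⟩ := hc hc0; simp
  · have key := Real.convexOn_mul_log.2 (Set.mem_Ici.2 ha) (Set.mem_Ici.2 hb)
      (sub_nonneg.2 ht1) ht0 (by ring)
    simp only [smul_eq_mul] at key
    rw [phi_eq_aux c hc0, phi_eq_aux c hc0, phi_eq_aux c hc0]
    nlinarith [key]

lemma isJoint_mix_aux (P : X → ℝ) (QY : Y → ℝ) (Q Q' : X × Y → ℝ)
    (hQ : IsJoint P QY Q) (hQ' : IsJoint P QY Q') (t : ℝ) (ht0 : 0 ≤ t) (ht1 : t ≤ 1) :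
    IsJoint P QY (fun p => (1 - t) * Q p + t * Q' p) := by
  refine ⟨fun p => add_nonneg (mul_nonneg (by linarith) (hQ.1 p))
    (mul_nonneg ht0 (hQ'.1 p)), fun x => ?_, fun y => ?_⟩
  · simp only [margX, Finset.sum_add_distrib, ← Finset.mul_sum]
    rw [show (∑ y, Q (x, y)) = margX Q x from rfl,
      show (∑ y, Q' (x, y)) = margX Q' x from rfl, hQ.2.1, hQ'.2.1]
    ring
  · simp only [margY, Finset.sum_add_distrib, ← Finset.mul_sum]
    rw [show (∑ x, Q (x, y)) = margY Q y from rfl,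
      show (∑ x, Q' (x, y)) = margY Q' y from rfl, hQ.2.2, hQ'.2.2]
    ring

lemma dav_mix_aux (d : X → Y → ℝ) (Q Q' : X × Y → ℝ) (t : ℝ) :
    Dav d (fun p => (1 - t) * Q p + t * Q' p) = (1 - t) * Dav d Q + t * Dav d Q' := by
  simp only [Dav, Finset.mul_sum, ← Finset.sum_add_distrib]
  refine Finset.sum_congr rfl fun x _ => Finset.sum_congr rfl fun y _ => by ring

lemma exists_mix_aux (P : X → ℝ) (QY : Y → ℝ) (d : X → Y → ℝ) (R : ℝ)
    (Q Qstar : X × Y → ℝ) (hQ : IsJoint P QY Q) (hQs : IsJoint P QY Qstar)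
    (hmin : mutInfo Qstar + Dav d Qstar ≤ mutInfo Q + Dav d Q)
    (hQR : mutInfo Q ≤ R) (hRs : R ≤ mutInfo Qstar) :
    ∃ Q' : X × Y → ℝ, IsJoint P QY Q' ∧ mutInfo Q' ≤ R ∧
      Dav d Q' ≤ mutInfo Q + Dav d Q - R := by
  set g : ℝ → ℝ := fun t => ∑ x, ∑ y,
    ((1 - t) * Q (x, y) + t * Qstar (x, y)) *
      Real.log (((1 - t) * Q (x, y) + t * Qstar (x, y)) / (P x * QY y)) with hg
  have hcont : Continuous g := by
    refine continuous_finset_sum _ fun x _ => continuous_finset_sum _ fun y _ => ?_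
    exact (cont_phi_aux (P x * QY y)).comp
      ((continuous_const.sub continuous_id).mul continuous_const |>.add
        (continuous_id.mul continuous_const))
  have hg0 : g 0 = mutInfo Q := by
    rw [mutInfo_eq_aux P QY Q hQ]; simp [hg]
  have hg1 : g 1 = mutInfo Qstar := by
    rw [mutInfo_eq_aux P QY Qstar hQs]; simp [hg]
  have hmem : R ∈ Set.Icc (g 0) (g 1) := ⟨hg0 ▸ hQR, hg1 ▸ hRs⟩
  obtain ⟨t, ht, hgt⟩ := intermediate_value_Icc (by norm_num : (0:ℝ) ≤ 1)
    hcont.continuousOn hmem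
  obtain ⟨ht0, ht1⟩ := ht
  set Q' : X × Y → ℝ := fun p => (1 - t) * Q p + t * Qstar p with hQ'def
  have hJ : IsJoint P QY Q' := isJoint_mix_aux P QY Q Qstar hQ hQs t ht0 ht1
  have hIQ' : mutInfo Q' = R := by
    rw [mutInfo_eq_aux P QY Q' hJ, ← hgt]
  have hconv : mutInfo Q' ≤ (1 - t) * mutInfo Q + t * mutInfo Qstar := by
    rw [mutInfo_eq_aux P QY Q' hJ, mutInfo_eq_aux P QY Q hQ,
      mutInfo_eq_aux P QY Qstar hQs]
    simp only [Finset.mul_sum, ← Finset.sum_add_distrib]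
    refine Finset.sum_le_sum fun x _ => Finset.sum_le_sum fun y _ => ?_
    exact phi_convex_aux (P x * QY y) (Q (x, y)) (Qstar (x, y)) t
      (hQ.1 (x, y)) (hQs.1 (x, y)) ht0 ht1
      (fun hc => ⟨joint_zero_aux P QY Q hQ x y hc,
        joint_zero_aux P QY Qstar hQs x y hc⟩)
  have hDlin : Dav d Q' = (1 - t) * Dav d Q + t * Dav d Qstar :=
    dav_mix_aux d Q Qstar t
  refine ⟨Q', hJ, hIQ'.le, ?_⟩
  nlinarith [hconv, hDlin, hIQ', hmin]

lemma dav_lb_aux (P : X → ℝ) (hP : (∀ x, 0 ≤ P x) ∧ ∑ x, P x = 1)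
    (QY : Y → ℝ) (d : X → Y → ℝ) (Q : X × Y → ℝ) (hQ : IsJoint P QY Q) :
    -(∑ x, ∑ y, |d x y|) ≤ Dav d Q := by
  rw [← Finset.sum_neg_distrib]
  refine Finset.sum_le_sum fun x _ => ?_
  rw [← Finset.sum_neg_distrib]
  refine Finset.sum_le_sum fun y _ => ?_
  have hle1 : Q (x, y) ≤ 1 := by
    have h1 : Q (x, y) ≤ P x := by
      rw [← hQ.2.1 x]
      exact Finset.single_le_sum (fun y' _ => hQ.1 (x, y')) (Finset.mem_univ y)
    have h2 : P x ≤ 1 := by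
      rw [← hP.2]
      exact Finset.single_le_sum (fun x' _ => hP.1 x') (Finset.mem_univ x)
    linarith
  have habs : |Q (x, y) * d x y| ≤ |d x y| := by
    rw [abs_mul, abs_of_nonneg (hQ.1 (x, y))]
    exact mul_le_of_le_one_left (abs_nonneg _) hle1
  linarith [(abs_le.1 habs).1]

theorem stmt12 (P : X → ℝ) (hP : (∀ x, 0 ≤ P x) ∧ ∑ x, P x = 1)
    (QY : Y → ℝ) (hQY : (∀ y, 0 ≤ QY y) ∧ ∑ y, QY y = 1)
    (d : X → Y → ℝ) (R : ℝ) (hR : 0 ≤ R)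
    (Qstar : X × Y → ℝ) (hQstar : IsJoint P QY Qstar)
    (hmin : ∀ Q : X × Y → ℝ, IsJoint P QY Q →
      mutInfo Qstar + Dav d Qstar ≤ mutInfo Q + Dav d Q)
    (hfeas : {Q : X × Y → ℝ | IsJoint P QY Q ∧ mutInfo Q ≤ R}.Nonempty) :
    (mutInfo Qstar ≤ R →
      sInf ((fun Q => mutInfo Q + Dav d Q) ''
          {Q : X × Y → ℝ | IsJoint P QY Q ∧ mutInfo Q ≤ R}) =
        mutInfo Qstar + Dav d Qstar)
    ∧ (R < mutInfo Qstar →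
      sInf ((fun Q => mutInfo Q + Dav d Q) ''
          {Q : X × Y → ℝ | IsJoint P QY Q ∧ mutInfo Q ≤ R}) =
        R + sInf (Dav d '' {Q : X × Y → ℝ | IsJoint P QY Q ∧ mutInfo Q ≤ R})) := by
  set S := {Q : X × Y → ℝ | IsJoint P QY Q ∧ mutInfo Q ≤ R} with hS
  set A := (fun Q => mutInfo Q + Dav d Q) '' S with hA
  set B := Dav d '' S with hB
  have hAne : A.Nonempty := hfeas.image _
  have hBne : B.Nonempty := hfeas.image _
  have hAbdd : BddBelow A := by
    refine ⟨mutInfo Qstar + Dav d Qstar, ?_⟩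
    rintro v ⟨Q, ⟨hQj, _⟩, rfl⟩
    exact hmin Q hQj
  have hBbdd : BddBelow B := by
    refine ⟨-(∑ x, ∑ y, |d x y|), ?_⟩
    rintro v ⟨Q, ⟨hQj, _⟩, rfl⟩
    exact dav_lb_aux P hP QY d Q hQj
  constructor
  · intro hle
    refine le_antisymm (csInf_le hAbdd ⟨Qstar, ⟨hQstar, hle⟩, rfl⟩) ?_
    refine le_csInf hAne ?_
    rintro v ⟨Q, ⟨hQj, _⟩, rfl⟩
    exact hmin Q hQj
  · intro hlt
    refine le_antisymm ?_ ?_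
    · have h1 : sInf A - R ≤ sInf B := by
        refine le_csInf hBne ?_
        rintro v ⟨Q, ⟨hQj, hQR⟩, rfl⟩
        have h2 : sInf A ≤ mutInfo Q + Dav d Q :=
          csInf_le hAbdd ⟨Q, ⟨hQj, hQR⟩, rfl⟩
        linarith
      linarith
    · refine le_csInf hAne ?_
      rintro v ⟨Q, ⟨hQj, hQR⟩, rfl⟩
      show R + sInf B ≤ mutInfo Q + Dav d Q
      obtain ⟨Q', hJ', hI', hD'⟩ := exists_mix_aux P QY d R Q Qstar hQj hQstar
        (hmin Q hQj) hQR hlt.le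
      have h3 : sInf B ≤ Dav d Q' := csInf_le hBbdd ⟨Q', ⟨hJ', hI'⟩, rfl⟩
      linarith
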